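/- Let ω_out, ω_in ∈ ℝ and let F : ℝ × ℝ → ℂ be arbitrary. For rays x = (d,m) ∈ 𝓡 with d ≠ ±e₃, define κ₂(x) = F(D(x), ⟨e₃, d⟩)·exp(−i·(ω_out − ω_in·⟨e₃, d⟩)·g(x)). Then for all γ, t ∈ ℝ and all such x: κ₂((R_Z(γ), t·e₃)·x) = exp(−i·(ω_out − ω_in·⟨e₃, d⟩)·t)·κ₂(x). -/

import Mathlib

noncomputable section
open scoped InnerProductSpace

/-- ℝ³ with the Euclidean norm. -/
abbrev E3 : Type := EuclideanSpace ℝ (Fin 3)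

/-- Elements of SE(3): a pair of a 3×3 matrix and a translation vector. -/
abbrev SE3 : Type := Matrix (Fin 3) (Fin 3) ℝ × E3

/-- Matrix-vector multiplication on ℝ³. -/
def mv (R : Matrix (Fin 3) (Fin 3) ℝ) (v : E3) : E3 := WithLp.toLp 2 (R.mulVec v)

/-- Cross product on ℝ³. -/
def cross3 (a b : E3) : E3 :=
  WithLp.toLp 2 ![a 1 * b 2 - a 2 * b 1, a 2 * b 0 - a 0 * b 2, a 0 * b 1 - a 1 * b 0]

/-- `R` is a special orthogonal 3×3 matrix: `RᵀR = I` and `det R = 1`. -/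
def isSO3 (R : Matrix (Fin 3) (Fin 3) ℝ) : Prop :=
  R.transpose * R = 1 ∧ R.det = 1

/-- `(d, m)` are Plücker coordinates of an oriented line: `d` is a unit
direction and `m` is a moment with `⟨d, m⟩ = 0`. -/
def isRay (d m : E3) : Prop := ‖d‖ = 1 ∧ ⟪d, m⟫_ℝ = 0

/-- The standard basis vector e₁. -/
def e1 : E3 := WithLp.toLp 2 ![1, 0, 0]

/-- The standard basis vector e₂. -/
def e2 : E3 := WithLp.toLp 2 ![0, 1, 0]

/-- The standard basis vector e₃. -/
def e3 : E3 := WithLp.toLp 2 ![0, 0, 1]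

/-- Action of `(R, t) ∈ SE(3)` on Plücker coordinates:
`(R,t)·(d,m) = (Rd, Rm + t × (Rd))`. -/
def rayAct (R : Matrix (Fin 3) (Fin 3) ℝ) (t : E3) (d m : E3) : E3 × E3 :=
  (mv R d, mv R m + cross3 t (mv R d))

/-- Multiplication in SE(3): `(R₁,t₁)·(R₂,t₂) = (R₁R₂, t₁ + R₁t₂)`. -/
def se3Mul (g₁ g₂ : SE3) : SE3 := (g₁.1 * g₂.1, g₁.2 + mv g₁.1 g₂.2)

/-- Inverse in SE(3) (for `g.1 ∈ SO(3)`): `(R,t)⁻¹ = (Rᵀ, -Rᵀt)`. -/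
def se3Inv (g : SE3) : SE3 := (g.1.transpose, -(mv g.1.transpose g.2))

/-- Action of `g ∈ SE(3)` on the ray space. -/
def act (g : SE3) (x : E3 × E3) : E3 × E3 := rayAct g.1 g.2 x.1 x.2

/-- Action of `g = (R,t) ∈ SE(3)` on points of ℝ³: `g·p = Rp + t`. -/
def actPt (g : SE3) (p : E3) : E3 := mv g.1 p + g.2

/-- The origin ray `η = (e₃, 0)`. -/
def eta : E3 × E3 := (e3, 0)

/-- The twist `h(g, x) = s(g·x)⁻¹ · g · s(x)` of a section `s`. -/
def twist (s : E3 × E3 → SE3) (g : SE3) (x : E3 × E3) : SE3 :=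
  se3Mul (se3Inv (s (act g x))) (se3Mul g (s x))

/-- Rotation by γ about the z-axis. -/
def RZ (γ : ℝ) : Matrix (Fin 3) (Fin 3) ℝ :=
  !![Real.cos γ, -Real.sin γ, 0; Real.sin γ, Real.cos γ, 0; 0, 0, 1]

/-- Rotation by β about the y-axis. -/
def RY (β : ℝ) : Matrix (Fin 3) (Fin 3) ℝ :=
  !![Real.cos β, 0, Real.sin β; 0, 1, 0; -Real.sin β, 0, Real.cos β]

/-- The underlying line of the ray with Plücker coordinates `(d, m)`:
`L(d,m) = {p : p × d = m}`. -/
def lineOf (d m : E3) : Set E3 := {p : E3 | cross3 p d = m}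

/-- Infimum of the Euclidean distances between points of the line `L(d,m)`
and points of the z-axis. -/
def Dzaxis (d m : E3) : ℝ :=
  sInf {r : ℝ | ∃ p ∈ lineOf d m, ∃ s : ℝ, r = dist p (s • e3)}

/-- The z-coordinate `g(x) = e₃·(c - λ·d)` (with `c = d × m` and
`λ = ((e₁·c)(e₁·d) + (e₂·c)(e₂·d))/(1 - (e₃·d)²)`) of the point of `L(d,m)`
closest to the z-axis (for `d ≠ ±e₃`). -/
def zfoot (d m : E3) : ℝ :=
  ⟪e3, cross3 d m - ((⟪e1, cross3 d m⟫_ℝ * ⟪e1, d⟫_ℝ + ⟪e2, cross3 d m⟫_ℝ * ⟪e2, d⟫_ℝ)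
      / (1 - ⟪e3, d⟫_ℝ ^ 2)) • d⟫_ℝ

/-- The kernel `κ₂(x) = F(D(x), ⟨e₃, d⟩)·exp(−i·(ω_out − ω_in·⟨e₃, d⟩)·g(x))`. -/
def kappa2 (ωout ωin : ℝ) (F : ℝ × ℝ → ℂ) (x : E3 × E3) : ℂ :=
  F (Dzaxis x.1 x.2, ⟪e3, x.1⟫_ℝ) *
    Complex.exp (-Complex.I * ((ωout : ℂ) - (ωin : ℂ) * (⟪e3, x.1⟫_ℝ : ℂ)) *
      (zfoot x.1 x.2 : ℂ))

lemma mv_RZ (γ : ℝ) (v : E3) :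
    mv (RZ γ) v = WithLp.toLp 2 ![Real.cos γ * v 0 - Real.sin γ * v 1,
      Real.sin γ * v 0 + Real.cos γ * v 1, v 2] := by
  ext i
  fin_cases i <;>
    simp [mv, RZ, Matrix.mulVec, dotProduct, Fin.sum_univ_three] <;> ring

lemma rayAct_RZ (γ t : ℝ) (d m : E3) :
    rayAct (RZ γ) (t • e3) d m =
      (WithLp.toLp 2 ![Real.cos γ * d 0 - Real.sin γ * d 1, Real.sin γ * d 0 + Real.cos γ * d 1, d 2],
       WithLp.toLp 2 ![Real.cos γ * m 0 - Real.sin γ * m 1 - t * (Real.sin γ * d 0 + Real.cos γ * d 1),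
         Real.sin γ * m 0 + Real.cos γ * m 1 + t * (Real.cos γ * d 0 - Real.sin γ * d 1),
         m 2]) := by
  unfold rayAct
  rw [mv_RZ, mv_RZ]
  refine Prod.ext rfl ?_
  ext i
  fin_cases i <;> simp [cross3, e3] <;> ring

lemma mem_lineOf_map (γ t : ℝ) {d m p : E3} (hp : p ∈ lineOf d m) :

    mv (RZ γ) p + t • e3 ∈
      lineOf (rayAct (RZ γ) (t • e3) d m).1 (rayAct (RZ γ) (t • e3) d m).2 := by
  have hcs := Real.sin_sq_add_cos_sq γ
  have h0 : p 1 * d 2 - p 2 * d 1 = m 0 := by simpa [cross3] using congrArg (fun v : E3 => v 0) hp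
  have h1 : p 2 * d 0 - p 0 * d 2 = m 1 := by simpa [cross3] using congrArg (fun v : E3 => v 1) hp
  have h2 : p 0 * d 1 - p 1 * d 0 = m 2 := by simpa [cross3] using congrArg (fun v : E3 => v 2) hp
  rw [rayAct_RZ, mv_RZ]
  show cross3 _ _ = _
  ext i
  fin_cases i
  · simp [cross3, e3]
    linear_combination Real.cos γ * h0 - Real.sin γ * h1
  · simp [cross3, e3]
    linear_combination Real.sin γ * h0 + Real.cos γ * h1
  · simp [cross3, e3]
    linear_combination (p 0 * d 1 - p 1 * d 0) * hcs + h2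

lemma dist_map (γ t s : ℝ) (p : E3) :
    dist (mv (RZ γ) p + t • e3) ((s + t) • e3) = dist p (s • e3) := by
  have hcs := Real.sin_sq_add_cos_sq γ
  rw [mv_RZ, EuclideanSpace.dist_eq, EuclideanSpace.dist_eq]
  congr 1
  simp [Fin.sum_univ_three, Real.dist_eq, sq_abs, e3]
  ring_nf
  linear_combination (p 0 ^ 2 + p 1 ^ 2) * hcs

lemma inv_act (γ t : ℝ) (d m : E3) :
    rayAct (RZ (-γ)) ((-t) • e3) (rayAct (RZ γ) (t • e3) d m).1
      (rayAct (RZ γ) (t • e3) d m).2 = (d, m) := by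
  have hcs := Real.sin_sq_add_cos_sq γ
  rw [rayAct_RZ, rayAct_RZ]
  simp only [Real.cos_neg, Real.sin_neg]
  refine Prod.ext ?_ ?_ <;> ext i <;> fin_cases i <;> simp <;>
    first
      | linear_combination d 0 * hcs
      | linear_combination d 1 * hcs
      | linear_combination m 0 * hcs
      | linear_combination m 1 * hcs

lemma Dzaxis_act (γ t : ℝ) (d m : E3) :
    Dzaxis (rayAct (RZ γ) (t • e3) d m).1 (rayAct (RZ γ) (t • e3) d m).2
      = Dzaxis d m := by
  unfold Dzaxis
  congr 1
  ext r
  constructor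
  · rintro ⟨p, hp, s, rfl⟩
    have h1 := mem_lineOf_map (-γ) (-t) hp
    rw [inv_act] at h1
    exact ⟨mv (RZ (-γ)) p + (-t) • e3, h1, s + (-t), (dist_map (-γ) (-t) s p).symm⟩
  · rintro ⟨p, hp, s, rfl⟩
    exact ⟨mv (RZ γ) p + t • e3, mem_lineOf_map γ t hp, s + t,
      (dist_map γ t s p).symm⟩

lemma inner_e3 (d : E3) : ⟪e3, d⟫_ℝ = d 2 := by
  simp [PiLp.inner_apply, Fin.sum_univ_three, e3]

lemma zfoot_apply (d m : E3) :
    zfoot d m = (d 0 * m 1 - d 1 * m 0) -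
      ((d 1 * m 2 - d 2 * m 1) * d 0 + (d 2 * m 0 - d 0 * m 2) * d 1)
        / (1 - d 2 ^ 2) * d 2 := by
  simp [zfoot, cross3, e1, e2, e3, PiLp.inner_apply, Fin.sum_univ_three]

lemma zfoot_act (γ t : ℝ) (d m : E3) (hd : d 0 ^ 2 + d 1 ^ 2 + d 2 ^ 2 = 1)
    (hden : 1 - d 2 ^ 2 ≠ 0) :
    zfoot (rayAct (RZ γ) (t • e3) d m).1 (rayAct (RZ γ) (t • e3) d m).2
      = zfoot d m + t := by
  have hcs := Real.sin_sq_add_cos_sq γ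
  rw [rayAct_RZ]
  rw [zfoot_apply, zfoot_apply]
  simp only [Matrix.cons_val_zero, Matrix.cons_val_one, Matrix.head_cons,
    Matrix.cons_val_two, Matrix.tail_cons]
  set c := Real.cos γ
  set s := Real.sin γ
  field_simp
  linear_combination
    (d 0 * m 1 - d 1 * m 0 + t * d 0 ^ 2 + t * d 1 ^ 2) * hcs + t * hd

/-- `κ₂((R_Z(γ), t·e₃)·x) = exp(−i·(ω_out − ω_in·⟨e₃, d⟩)·t)·κ₂(x)`
for every ray `x = (d,m)` with `d ≠ ±e₃`. -/
theorem statement13 (ωout ωin : ℝ) (F : ℝ × ℝ → ℂ) (d m : E3) (h : isRay d m)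
    (h1 : d ≠ e3) (h2 : d ≠ -e3) (γ t : ℝ) :
    kappa2 ωout ωin F (rayAct (RZ γ) (t • e3) d m)
      = Complex.exp (-Complex.I * ((ωout : ℂ) - (ωin : ℂ) * (⟪e3, d⟫_ℝ : ℂ)) * (t : ℂ))
          * kappa2 ωout ωin F (d, m) := by
  have hd : d 0 ^ 2 + d 1 ^ 2 + d 2 ^ 2 = 1 := by
    have h1' := h.1
    rw [EuclideanSpace.norm_eq] at h1'
    have h2' := Real.sqrt_eq_one.mp h1'
    simpa [Fin.sum_univ_three, Real.norm_eq_abs, sq_abs] using h2'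
  have hden : 1 - d 2 ^ 2 ≠ 0 := by
    intro h0
    have hd0 : d 0 = 0 := by nlinarith
    have hd1 : d 1 = 0 := by nlinarith
    have hc : (d 2 - 1) * (d 2 + 1) = 0 := by nlinarith
    rcases mul_eq_zero.mp hc with hc | hc
    · exact h1 (by ext i; fin_cases i <;> simp [e3, hd0, hd1] <;> linarith)
    · exact h2 (by ext i; fin_cases i <;> simp [e3, hd0, hd1] <;> linarith)
  have hD := Dzaxis_act γ t d m
  have hz := zfoot_act γ t d m hd hden
  have hi : ⟪e3, (rayAct (RZ γ) (t • e3) d m).1⟫_ℝ = ⟪e3, d⟫_ℝ := by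
    rw [rayAct_RZ, inner_e3, inner_e3]; simp
  unfold kappa2
  rw [hD, hz, hi]
  have : ((zfoot d m + t : ℝ) : ℂ) = (zfoot d m : ℂ) + (t : ℂ) := by push_cast; ring
  rw [this, show (-Complex.I * ((ωout : ℂ) - (ωin : ℂ) * (⟪e3, d⟫_ℝ : ℝ)) *
      ((zfoot d m : ℂ) + (t : ℂ)))
    = -Complex.I * ((ωout : ℂ) - (ωin : ℂ) * (⟪e3, d⟫_ℝ : ℝ)) * (t : ℂ)
      + -Complex.I * ((ωout : ℂ) - (ωin : ℂ) * (⟪e3, d⟫_ℝ : ℝ)) * (zfoot d m : ℂ)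
        from by ring, Complex.exp_add]
  ring

end
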